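/- Let a be a nonzero integer and let b, c ≥ 1 be integers. Then [a, 2, …, 2, −2, …, −2] (with b copies of 2 followed by c copies of −2 after the entry a) = [a − 1, −(b+1), −2, c]. -/
import Mathlib


/-- The (subtractive) continued fraction value of a finite list of rationals:
`cf [] = 0` and `cf (a :: t) = (a - cf t)⁻¹`. -/
def cf : List ℚ → ℚ
  | [] => 0
  | a :: t => (a - cf t)⁻¹

lemma cf_neg2 (c : ℕ) : cf (List.replicate c (-2 : ℚ)) = -(c : ℚ) / (c + 1) := by
  induction c with
  | zero => simp [cf]
  | succ n ih =>
    have h1 : (n : ℚ) + 1 ≠ 0 := by positivity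
    have h2 : (n : ℚ) + 2 ≠ 0 := by positivity
    rw [List.replicate_succ, cf, ih]
    push_cast
    have e : -2 - -(n : ℚ) / (n + 1) = -((n : ℚ) + 2) / (n + 1) := by
      field_simp; ring
    rw [e, inv_div, div_neg, neg_div, neg_inj]
    congr 1
    ring

lemma cf_two (b c : ℕ) :
    cf (List.replicate b (2 : ℚ) ++ List.replicate c (-2 : ℚ)) =
      1 - (2 * c + 1) / ((c : ℚ) + 1 + b * (2 * c + 1)) := by
  induction b with
  | zero =>
    simp [cf_neg2]
    have h1 : (c : ℚ) + 1 ≠ 0 := by positivity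
    field_simp
    ring
  | succ n ih =>
    have hd : (c : ℚ) + 1 + n * (2 * c + 1) ≠ 0 := by positivity
    have hd2 : (c : ℚ) + 1 + (n + 1) * (2 * c + 1) ≠ 0 := by positivity
    rw [List.replicate_succ, List.cons_append, cf, ih]
    push_cast
    have e1 : 2 - (1 - (2 * (c : ℚ) + 1) / ((c : ℚ) + 1 + n * (2 * c + 1)))
        = ((c : ℚ) + 1 + (n + 1) * (2 * c + 1)) / ((c : ℚ) + 1 + n * (2 * c + 1)) := by
      field_simp; ring
    rw [e1, inv_div]
    field_simp
    ring

theorem stmt_13 (a : ℤ) (ha : a ≠ 0) (b c : ℕ) (hb : 1 ≤ b) (hc : 1 ≤ c) :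
    cf ((a : ℚ) :: (List.replicate b (2 : ℚ) ++ List.replicate c (-2 : ℚ))) =
      cf [(a : ℚ) - 1, -((b : ℚ) + 1), -2, (c : ℚ)] := by
  have hc0 : (0:ℚ) < c := by exact_mod_cast hc
  have hd : (c : ℚ) + 1 + b * (2 * c + 1) ≠ 0 := by positivity
  rw [cf, cf_two, cf, cf, cf, cf]
  congr 1
  have e1 : ((c:ℚ) - cf []) = c := by simp [cf]
  rw [e1]
  have h2 : (-2 : ℚ) - ((c:ℚ))⁻¹ = -(2*c+1)/c := by field_simp; ring
  rw [h2]
  have h2c : (2 * (c:ℚ) + 1) ≠ 0 := by positivity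
  have h3 : -((b : ℚ) + 1) - (-(2*(c:ℚ)+1)/c)⁻¹ = -((c:ℚ) + 1 + b * (2 * c + 1))/(2*c+1) := by
    rw [inv_div, div_neg, neg_div]
    field_simp
    ring
  rw [h3]
  have h4 : (-((c:ℚ) + 1 + b * (2 * c + 1))/(2*c+1))⁻¹
      = -((2*(c:ℚ)+1)/((c:ℚ) + 1 + b * (2 * c + 1))) := by
    rw [neg_div, inv_neg, inv_div]
  rw [h4]
  ring
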